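/- Let a, b, c, d ∈ ℂ with a·d − b·c = 1, let A, C ∈ ℝ and B ∈ ℂ, and let ζ ∈ ℂ with c·ζ + d ≠ 0; set ζ' = (a·ζ + b)/(c·ζ + d). Then (A + B·ζ + conj(B)·conj(ζ) + C·|ζ|²)/(|a·ζ + b|² + |c·ζ + d|²) = (A' + B'·ζ' + conj(B')·conj(ζ') + C'·|ζ'|²)/(1 + |ζ'|²), where A' = A·|a|² − B·b·conj(a) − conj(B)·conj(b)·a + C·|b|², B' = B·d·conj(a) + conj(B)·conj(b)·c − A·conj(a)·c − C·d·conj(b), and C' = A·|c|² − B·conj(c)·d − conj(B)·c·conj(d) + C·|d|². In particular A' and C' are real, so a Lorentz (fractional-linear) transformation maps the family of good-cut functions to itself with the stated coefficient transformation. -/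

import Mathlib

noncomputable section

set_option maxRecDepth 4000

open Complex

/-- A fractional-linear (Lorentz) transformation maps the family of good-cut functions
to itself: with `ζ' = (a·ζ + b)/(c·ζ + d)` and the stated coefficient transformation
`(A, B, C) ↦ (A', B', C')`, the good-cut function is re-expressed in the new coordinate,
and `A'`, `C'` are real. -/
theorem good_cut_coefficient_transformation
    (a b c d : ℂ) (h : a * d - b * c = 1) (A C : ℝ) (B : ℂ) (ζ : ℂ)
    (hζ : c * ζ + d ≠ 0) :
    let ζ' : ℂ := (a * ζ + b) / (c * ζ + d)
    let A' : ℂ := (A : ℂ) * (normSq a : ℂ) - B * b * (starRingEnd ℂ) a -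
      (starRingEnd ℂ) B * (starRingEnd ℂ) b * a + (C : ℂ) * (normSq b : ℂ)
    let B' : ℂ := B * d * (starRingEnd ℂ) a + (starRingEnd ℂ) B * (starRingEnd ℂ) b * c -
      (A : ℂ) * (starRingEnd ℂ) a * c - (C : ℂ) * d * (starRingEnd ℂ) b
    let C' : ℂ := (A : ℂ) * (normSq c : ℂ) - B * (starRingEnd ℂ) c * d -
      (starRingEnd ℂ) B * c * (starRingEnd ℂ) d + (C : ℂ) * (normSq d : ℂ)
    ((A : ℂ) + B * ζ + (starRingEnd ℂ) B * (starRingEnd ℂ) ζ + (C : ℂ) * (normSq ζ : ℂ)) /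
        ((normSq (a * ζ + b) : ℂ) + (normSq (c * ζ + d) : ℂ)) =
      (A' + B' * ζ' + (starRingEnd ℂ) B' * (starRingEnd ℂ) ζ' + C' * (normSq ζ' : ℂ)) /
        (1 + (normSq ζ' : ℂ)) ∧
    (starRingEnd ℂ) A' = A' ∧ (starRingEnd ℂ) C' = C' := by
  intro ζ' A' B' C'
  have h' : (starRingEnd ℂ) (a * d - b * c) = (starRingEnd ℂ) 1 := by rw [h]
  simp only [map_sub, map_mul, map_one] at h'
  have hζ' : (starRingEnd ℂ) c * (starRingEnd ℂ) ζ + (starRingEnd ℂ) d ≠ 0 := fun H => hζ (by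
    have := congrArg (starRingEnd ℂ) H
    simpa using this)
  have hD : ((normSq (a * ζ + b) : ℂ) + (normSq (c * ζ + d) : ℂ)) ≠ 0 := by
    have h1 : (0:ℝ) < normSq (a * ζ + b) + normSq (c * ζ + d) := by
      have := Complex.normSq_pos.mpr hζ
      have := Complex.normSq_nonneg (a * ζ + b)
      linarith
    exact_mod_cast h1.ne'
  have hD2 : (1 + (normSq ζ' : ℂ)) ≠ 0 := by
    have h1 : (0:ℝ) < 1 + normSq ζ' := by
      have := Complex.normSq_nonneg ζ'
      linarith
    exact_mod_cast h1.ne'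
  simp only [ζ', A', B', C'] at hD2 ⊢
  clear_value ζ' A' B' C'
  clear ζ' A' B' C'
  refine ⟨?_, ?_, ?_⟩
  · rw [div_eq_div_iff hD hD2]
    simp only [← Complex.mul_conj]
    simp only [map_div₀, map_add, map_sub, map_mul, Complex.conj_conj, Complex.conj_ofReal]
    have hz1 : ζ * c + d ≠ 0 := by rwa [mul_comm]
    have hz2 : (starRingEnd ℂ) ζ * (starRingEnd ℂ) c + (starRingEnd ℂ) d ≠ 0 := by rwa [mul_comm]
    field_simp
    linear_combination (-(((A:ℂ) + B*ζ + (starRingEnd ℂ) B*(starRingEnd ℂ) ζ +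
        (C:ℂ)*(ζ*(starRingEnd ℂ) ζ)) *
        ((a*ζ+b)*((starRingEnd ℂ) a*(starRingEnd ℂ) ζ+(starRingEnd ℂ) b) +
         (c*ζ+d)*((starRingEnd ℂ) c*(starRingEnd ℂ) ζ+(starRingEnd ℂ) d))) *
        ((starRingEnd ℂ) a*(starRingEnd ℂ) d - (starRingEnd ℂ) b*(starRingEnd ℂ) c)) * h +
      (-(((A:ℂ) + B*ζ + (starRingEnd ℂ) B*(starRingEnd ℂ) ζ +
        (C:ℂ)*(ζ*(starRingEnd ℂ) ζ)) *
        ((a*ζ+b)*((starRingEnd ℂ) a*(starRingEnd ℂ) ζ+(starRingEnd ℂ) b) +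
         (c*ζ+d)*((starRingEnd ℂ) c*(starRingEnd ℂ) ζ+(starRingEnd ℂ) d)))) * h'
  · simp only [map_sub, map_add, map_mul, Complex.conj_conj, Complex.conj_ofReal]
    ring
  · simp only [map_sub, map_add, map_mul, Complex.conj_conj, Complex.conj_ofReal]
    ring
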